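/- Let n ≥ 1 and p ≥ 1 be integers, and let T(i,j,k,α) (1 ≤ i,j,k ≤ n, 1 ≤ α ≤ p) be a family of real numbers that is invariant under all permutations of the indices i, j, k. Then Σ_{i,j,k,α} T(i,j,k,α)² ≥ (3/(n+2)) Σ_{k,α} (Σ_i T(i,i,k,α))². -/
import Mathlib


open scoped BigOperators

/-- Huisken's estimate (pointwise algebraic form): for a family `T(i,j,k,α)` totally
symmetric in `i,j,k`, `Σ T² ≥ (3/(n+2)) Σ_{k,α} (Σ_i T(i,i,k,α))²`. -/
theorem stmt_4 (n p : ℕ) (hn : 1 ≤ n) (hp : 1 ≤ p)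
    (T : Fin n → Fin n → Fin n → Fin p → ℝ)
    (hsym1 : ∀ i j k α, T i j k α = T j i k α)
    (hsym2 : ∀ i j k α, T i j k α = T i k j α) :
    (3 / ((n : ℝ) + 2)) * ∑ k, ∑ α, (∑ i, T i i k α) ^ 2
      ≤ ∑ i, ∑ j, ∑ k, ∑ α, (T i j k α) ^ 2 := by
  classical
  set d : Fin n → Fin n → ℝ := fun a b => if a = b then 1 else 0 with hd
  have dcomm : ∀ a b, d a b = d b a := by intro a b; simp [hd, eq_comm]
  have ddiag : ∀ i, d i i = 1 := by intro i; simp [hd]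
  have dsum : ∀ (i : Fin n) (f : Fin n → ℝ), (∑ j, d i j * f j) = f i := by
    intro i f
    simp [hd, ite_mul, Finset.sum_ite_eq]
  set H : Fin n → Fin p → ℝ := fun k α => ∑ i, T i i k α with hH
  set A : Fin n → Fin n → Fin n → Fin p → ℝ := fun i j k α =>
    d i j * H k α + d i k * H j α + d j k * H i α with hAdef
  have hA1 : ∀ i j k α, A i j k α = A j i k α := by
    intro i j k α; simp only [hAdef]; rw [dcomm i j, dcomm i k, dcomm j k]; ring
  have hA2 : ∀ i j k α, A i j k α = A i k j α := by
    intro i j k α; simp only [hAdef]; rw [dcomm j k]; ring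
  -- the key generic computation: for any totally symmetric U,
  -- Σ U·A = 3 Σ (tr U)·H
  have main : ∀ (U : Fin n → Fin n → Fin n → Fin p → ℝ),
      (∀ i j k α, U i j k α = U j i k α) → (∀ i j k α, U i j k α = U i k j α) →
      (∑ i, ∑ j, ∑ k, ∑ α, U i j k α * A i j k α)
        = 3 * ∑ k, ∑ α, (∑ i, U i i k α) * H k α := by
    intro U hU1 hU2
    have split : (∑ i, ∑ j, ∑ k, ∑ α, U i j k α * A i j k α)
        = (∑ i, ∑ j, ∑ k, ∑ α, U i j k α * (d i j * H k α))
        + ((∑ i, ∑ j, ∑ k, ∑ α, U i j k α * (d i k * H j α))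
          + (∑ i, ∑ j, ∑ k, ∑ α, U i j k α * (d j k * H i α))) := by
      simp only [hAdef, mul_add, Finset.sum_add_distrib, add_assoc]
    rw [split]
    have P1 : (∑ i, ∑ j, ∑ k, ∑ α, U i j k α * (d i j * H k α))
        = ∑ k, ∑ α, (∑ i, U i i k α) * H k α := by
      have e1 : ∀ i : Fin n, (∑ j, ∑ k, ∑ α, U i j k α * (d i j * H k α))
          = ∑ k, ∑ α, U i i k α * H k α := by
        intro i
        have h' : ∀ j, (∑ k, ∑ α, U i j k α * (d i j * H k α))
            = d i j * (∑ k, ∑ α, U i j k α * H k α) := by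
          intro j
          rw [Finset.mul_sum]
          refine Finset.sum_congr rfl fun k _ => ?_
          rw [Finset.mul_sum]
          exact Finset.sum_congr rfl fun α _ => by ring
        rw [Finset.sum_congr rfl fun j _ => h' j, dsum]
      rw [Finset.sum_congr rfl fun i _ => e1 i, Finset.sum_comm]
      refine Finset.sum_congr rfl fun k _ => ?_
      rw [Finset.sum_comm]
      refine Finset.sum_congr rfl fun α _ => ?_
      rw [Finset.sum_mul]
    have P2 : (∑ i, ∑ j, ∑ k, ∑ α, U i j k α * (d i k * H j α))
        = ∑ k, ∑ α, (∑ i, U i i k α) * H k α := by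
      have e2 : ∀ i j : Fin n, (∑ k, ∑ α, U i j k α * (d i k * H j α))
          = ∑ α, U i i j α * H j α := by
        intro i j
        have h' : ∀ k, (∑ α, U i j k α * (d i k * H j α))
            = d i k * (∑ α, U i j k α * H j α) := by
          intro k
          rw [Finset.mul_sum]
          exact Finset.sum_congr rfl fun α _ => by ring
        rw [Finset.sum_congr rfl fun k _ => h' k, dsum]
        exact Finset.sum_congr rfl fun α _ => by rw [hU2 i j i α]
      rw [Finset.sum_congr rfl fun i _ => Finset.sum_congr rfl fun j _ => e2 i j,
        Finset.sum_comm]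
      refine Finset.sum_congr rfl fun j _ => ?_
      rw [Finset.sum_comm]
      refine Finset.sum_congr rfl fun α _ => ?_
      rw [Finset.sum_mul]
    have P3 : (∑ i, ∑ j, ∑ k, ∑ α, U i j k α * (d j k * H i α))
        = ∑ k, ∑ α, (∑ i, U i i k α) * H k α := by
      have e3 : ∀ i j : Fin n, (∑ k, ∑ α, U i j k α * (d j k * H i α))
          = ∑ α, U j j i α * H i α := by
        intro i j
        have h' : ∀ k, (∑ α, U i j k α * (d j k * H i α))
            = d j k * (∑ α, U i j k α * H i α) := by
          intro k
          rw [Finset.mul_sum]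
          exact Finset.sum_congr rfl fun α _ => by ring
        rw [Finset.sum_congr rfl fun k _ => h' k, dsum]
        exact Finset.sum_congr rfl fun α _ => by rw [hU1 i j j α, hU2 j i j α]
      rw [Finset.sum_congr rfl fun i _ => Finset.sum_congr rfl fun j _ => e3 i j]
      refine Finset.sum_congr rfl fun i _ => ?_
      rw [Finset.sum_comm]
      refine Finset.sum_congr rfl fun α _ => ?_
      rw [Finset.sum_mul]
    rw [P1, P2, P3]; ring
  -- trace of A
  have trA : ∀ (k : Fin n) (α : Fin p), (∑ i, A i i k α) = ((n : ℝ) + 2) * H k α := by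
    intro k α
    have e : ∀ i, A i i k α = H k α + 2 * (d i k * H i α) := by
      intro i; simp only [hAdef]; rw [ddiag]; ring
    rw [Finset.sum_congr rfl fun i _ => e i, Finset.sum_add_distrib]
    have t1 : (∑ _i : Fin n, H k α) = (n : ℝ) * H k α := by
      simp [Finset.sum_const, Finset.card_univ, nsmul_eq_mul]
    have t2 : (∑ i, 2 * (d i k * H i α)) = 2 * H k α := by
      rw [← Finset.mul_sum]
      congr 1
      rw [Finset.sum_congr rfl fun i _ => by rw [dcomm i k], dsum k (fun i => H i α)]
    rw [t1, t2]; ring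
  set R : ℝ := ∑ k, ∑ α, H k α * H k α with hR
  have hTA : (∑ i, ∑ j, ∑ k, ∑ α, T i j k α * A i j k α) = 3 * R := by
    rw [main T hsym1 hsym2, hR]
  have hAA : (∑ i, ∑ j, ∑ k, ∑ α, A i j k α * A i j k α) = (3 * ((n : ℝ) + 2)) * R := by
    rw [main A hA1 hA2]
    have e : ∀ (k : Fin n) (α : Fin p),
        (∑ i, A i i k α) * H k α = ((n : ℝ) + 2) * (H k α * H k α) := by
      intro k α; rw [trA]; ring
    rw [Finset.sum_congr rfl fun k _ => Finset.sum_congr rfl fun α _ => e k α]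
    simp only [← Finset.mul_sum, hR]
    ring
  set c : ℝ := 1 / ((n : ℝ) + 2) with hcdef
  have key : (0 : ℝ) ≤ ∑ i, ∑ j, ∑ k, ∑ α, (T i j k α - c * A i j k α) ^ 2 :=
    Finset.sum_nonneg fun i _ => Finset.sum_nonneg fun j _ =>
      Finset.sum_nonneg fun k _ => Finset.sum_nonneg fun α _ => sq_nonneg _
  have pt : ∀ i j k α, (T i j k α - c * A i j k α) ^ 2
      = T i j k α ^ 2 - 2 * c * (T i j k α * A i j k α)
        + c ^ 2 * (A i j k α * A i j k α) := fun i j k α => by ring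
  have expand : (∑ i, ∑ j, ∑ k, ∑ α, (T i j k α - c * A i j k α) ^ 2)
      = (∑ i, ∑ j, ∑ k, ∑ α, T i j k α ^ 2)
        - 2 * c * (∑ i, ∑ j, ∑ k, ∑ α, T i j k α * A i j k α)
        + c ^ 2 * (∑ i, ∑ j, ∑ k, ∑ α, A i j k α * A i j k α) := by
    simp only [pt, Finset.sum_add_distrib, Finset.sum_sub_distrib, ← Finset.mul_sum]
  rw [expand, hTA, hAA] at key
  have hne : ((n : ℝ) + 2) ≠ 0 := by positivity
  have harith : (∑ i, ∑ j, ∑ k, ∑ α, T i j k α ^ 2) - 2 * c * (3 * R)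
      + c ^ 2 * ((3 * ((n : ℝ) + 2)) * R)
      = (∑ i, ∑ j, ∑ k, ∑ α, T i j k α ^ 2) - (3 / ((n : ℝ) + 2)) * R := by
    rw [hcdef]
    field_simp
    ring
  rw [harith] at key
  have hQR : (∑ k, ∑ α, (∑ i, T i i k α) ^ 2) = R := by
    rw [hR]
    exact Finset.sum_congr rfl fun k _ => Finset.sum_congr rfl fun α _ => by
      rw [hH]; ring
  rw [hQR]
  linarith
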